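/- Consider attitude kinematics on SO(3) with measured directions y_k = Rᵀ e_k for k = 2,3, estimate R̃, and error E = R R̃ᵀ. For the cost V^e(E) = Σ_{k=2}^{3} ‖e_k − E e_k‖², the left-trivialized differential of V^e at E, paired with ξ ∈ ℝ³ (identified with so(3) via the hat map), equals Σ_{k=2}^{3} ⟨ −2 ê_k R̃ y_k , ξ ⟩; in particular this gradient depends only on R̃ and the measurements y₂, y₃ and not directly on R. -/

import Mathlib

open Matrix

/-- The hat map ℝ³ → so(3), the canonical isomorphism with `hat x *ᵥ v = x × v`. -/
def hat (x : Fin 3 → ℝ) : Matrix (Fin 3) (Fin 3) ℝ :=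
  !![0, -x 2, x 1; x 2, 0, -x 0; -x 1, x 0, 0]

attribute [local instance] Matrix.linftyOpNormedRing Matrix.linftyOpNormedAlgebra

/-- `mulVec` by a fixed vector, as a linear map in the matrix. -/
def mvL (e : Fin 3 → ℝ) : Matrix (Fin 3) (Fin 3) ℝ →ₗ[ℝ] (Fin 3 → ℝ) where
  toFun M := M.mulVec e
  map_add' M N := by simp [Matrix.add_mulVec]
  map_smul' c M := by simp [Matrix.smul_mulVec]

lemma hasDerivAt_dotProduct {u v : ℝ → Fin 3 → ℝ} {u' v' : Fin 3 → ℝ} {t : ℝ}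
    (hu : HasDerivAt u u' t) (hv : HasDerivAt v v' t) :
    HasDerivAt (fun s => u s ⬝ᵥ v s) (u' ⬝ᵥ v t + u t ⬝ᵥ v') t := by
  have hu' := hasDerivAt_pi.1 hu
  have hv' := hasDerivAt_pi.1 hv
  simp only [dotProduct, Fin.sum_univ_three] at *
  have := (((hu' 0).fun_mul (hv' 0)).fun_add ((hu' 1).fun_mul (hv' 1))).fun_add ((hu' 2).fun_mul (hv' 2))
  refine this.congr_deriv ?_
  ring

lemma dot_hat_self (ξ e : Fin 3 → ℝ) : e ⬝ᵥ (hat ξ).mulVec e = 0 := by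
  simp [hat, mulVec, dotProduct, Fin.sum_univ_three]
  ring

lemma triple_prod (u ξ e : Fin 3 → ℝ) :
    u ⬝ᵥ (hat ξ).mulVec e = ((hat e).mulVec u) ⬝ᵥ ξ := by
  simp [hat, mulVec, dotProduct, Fin.sum_univ_three]
  ring

theorem attitude_gradient_innovation
    (R Rt : Matrix (Fin 3) (Fin 3) ℝ)
    (hR : R ∈ Matrix.specialOrthogonalGroup (Fin 3) ℝ)
    (hRt : Rt ∈ Matrix.specialOrthogonalGroup (Fin 3) ℝ)
    (ξ : Fin 3 → ℝ) :
    let e2 : Fin 3 → ℝ := ![0, 1, 0]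
    let e3 : Fin 3 → ℝ := ![0, 0, 1]
    let y2 : Fin 3 → ℝ := Rᵀ.mulVec e2
    let y3 : Fin 3 → ℝ := Rᵀ.mulVec e3
    let E : Matrix (Fin 3) (Fin 3) ℝ := R * Rtᵀ
    let Ve : Matrix (Fin 3) (Fin 3) ℝ → ℝ := fun M =>
      (e2 - M.mulVec e2) ⬝ᵥ (e2 - M.mulVec e2) + (e3 - M.mulVec e3) ⬝ᵥ (e3 - M.mulVec e3)
    deriv (fun s : ℝ => Ve (E * NormedSpace.exp (s • hat ξ))) 0
      = ((-2 : ℝ) • (hat e2).mulVec (Rt.mulVec y2)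
          + (-2 : ℝ) • (hat e3).mulVec (Rt.mulVec y3)) ⬝ᵥ ξ := by
  intro e2 e3 y2 y3 E Ve
  -- orthogonality facts
  have hRo : R * Rᵀ = 1 := by
    have := ((Matrix.mem_specialOrthogonalGroup_iff).1 hR).1
    rw [Matrix.mem_orthogonalGroup_iff] at this
    simpa [Matrix.star_eq_conjTranspose] using this
  have hRto : Rt * Rtᵀ = 1 := by
    have := ((Matrix.mem_specialOrthogonalGroup_iff).1 hRt).1
    rw [Matrix.mem_orthogonalGroup_iff] at this
    simpa [Matrix.star_eq_conjTranspose] using this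
  have hRo' : Rᵀ * R = 1 := by
    have := ((Matrix.mem_specialOrthogonalGroup_iff).1 hR).1
    rw [Matrix.mem_orthogonalGroup_iff'] at this
    simpa [Matrix.star_eq_conjTranspose] using this
  have hEo : Eᵀ * E = 1 := by
    show (R * Rtᵀ)ᵀ * (R * Rtᵀ) = 1
    rw [Matrix.transpose_mul, Matrix.transpose_transpose]
    calc Rt * Rᵀ * (R * Rtᵀ) = Rt * ((Rᵀ * R) * Rtᵀ) := by
          simp only [mul_assoc]
      _ = 1 := by rw [hRo', one_mul, hRto]
  have hy2 : Rt.mulVec y2 = Eᵀ.mulVec e2 := by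
    show Rt.mulVec (Rᵀ.mulVec e2) = (R * Rtᵀ)ᵀ.mulVec e2
    rw [Matrix.mulVec_mulVec, Matrix.transpose_mul, Matrix.transpose_transpose]
  have hy3 : Rt.mulVec y3 = Eᵀ.mulVec e3 := by
    show Rt.mulVec (Rᵀ.mulVec e3) = (R * Rtᵀ)ᵀ.mulVec e3
    rw [Matrix.mulVec_mulVec, Matrix.transpose_mul, Matrix.transpose_transpose]
  clear_value E
  set A : Matrix (Fin 3) (Fin 3) ℝ := hat ξ with hA
  -- derivative of the matrix curve
  have hg : HasDerivAt (fun s : ℝ => E * NormedSpace.exp (s • A)) (E * A) 0 := by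
    have h1 : HasDerivAt (fun s : ℝ => NormedSpace.exp (s • A))
        (NormedSpace.exp ((0:ℝ) • A) * A) 0 := hasDerivAt_exp_smul_const A 0
    simp only [zero_smul, NormedSpace.exp_zero, one_mul] at h1
    exact h1.const_mul E
  have hg0 : (fun s : ℝ => E * NormedSpace.exp (s • A)) 0 = E := by
    simp [NormedSpace.exp_zero]
  -- derivative of each residual
  have hmv : ∀ e : Fin 3 → ℝ,
      HasDerivAt (fun s : ℝ => e - (E * NormedSpace.exp (s • A)).mulVec e)
        (-(E * A).mulVec e) 0 := by
    intro e
    have hc : HasDerivAt (fun s : ℝ => (E * NormedSpace.exp (s • A)).mulVec e)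
        ((E * A).mulVec e) 0 := by
      have := ((mvL e).toContinuousLinearMap.hasFDerivAt
        (x := (fun s : ℝ => E * NormedSpace.exp (s • A)) 0)).comp_hasDerivAt 0 hg
      exact this
    exact ((hasDerivAt_const (0:ℝ) e).fun_sub hc).congr_deriv (by simp)
  have hmv0 : ∀ e : Fin 3 → ℝ,
      (fun s : ℝ => e - (E * NormedSpace.exp (s • A)).mulVec e) 0 = e - E.mulVec e := by
    intro e; simp [NormedSpace.exp_zero]
  -- total derivative
  have hD : HasDerivAt (fun s : ℝ => Ve (E * NormedSpace.exp (s • A)))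
      ((-(E * A).mulVec e2) ⬝ᵥ (e2 - E.mulVec e2) + (e2 - E.mulVec e2) ⬝ᵥ (-(E * A).mulVec e2)
        + ((-(E * A).mulVec e3) ⬝ᵥ (e3 - E.mulVec e3)
          + (e3 - E.mulVec e3) ⬝ᵥ (-(E * A).mulVec e3))) 0 := by
    have h2 := hasDerivAt_dotProduct (hmv e2) (hmv e2)
    have h3 := hasDerivAt_dotProduct (hmv e3) (hmv e3)
    simp only [zero_smul, NormedSpace.exp_zero, mul_one] at h2 h3
    exact h2.add h3
  rw [hD.deriv]
  -- now pure algebra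
  have key : ∀ e : Fin 3 → ℝ, e ⬝ᵥ e = 1 →
      (e - E.mulVec e) ⬝ᵥ ((E * A).mulVec e) = ((hat e).mulVec (Eᵀ.mulVec e)) ⬝ᵥ ξ := by
    intro e _
    have h1 : (E.mulVec e) ⬝ᵥ ((E * A).mulVec e) = e ⬝ᵥ (A.mulVec e) := by
      rw [← Matrix.mulVec_mulVec, Matrix.dotProduct_mulVec (E.mulVec e) E,
        ← Matrix.mulVec_transpose, Matrix.mulVec_mulVec, hEo, Matrix.one_mulVec,
        Matrix.dotProduct_mulVec, ← Matrix.mulVec_transpose]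
    have h2 : e ⬝ᵥ ((E * A).mulVec e) = (Eᵀ.mulVec e) ⬝ᵥ (A.mulVec e) := by
      rw [← Matrix.mulVec_mulVec, Matrix.dotProduct_mulVec e E, ← Matrix.mulVec_transpose,
        Matrix.dotProduct_mulVec, ← Matrix.mulVec_transpose]
    rw [sub_dotProduct, h1, h2, hA, dot_hat_self, sub_zero, triple_prod]
  have he2 : e2 ⬝ᵥ e2 = 1 := by simp [e2, dotProduct, Fin.sum_univ_three]
  have he3 : e3 ⬝ᵥ e3 = 1 := by simp [e3, dotProduct, Fin.sum_univ_three]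
  have k2 := key e2 he2
  have k3 := key e3 he3
  rw [hy2, hy3]
  rw [add_dotProduct, smul_dotProduct, smul_dotProduct, ← k2, ← k3]
  simp only [neg_dotProduct, dotProduct_neg, dotProduct_comm, smul_eq_mul]
  ring
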